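/- Let A be a Banach algebra over ℂ and τ : A → ℂ a continuous ℂ-linear functional with τ(xy) = τ(yx) for all x, y ∈ A. Let α : ℝ → A have derivative α' at s₀ (in the sense of HasDerivAt), and let β, γ ∈ A commute with α(s₀). Then for every polynomial f ∈ ℂ[X], the function s ↦ τ( β · f(α(s)) · γ ) is differentiable at s₀ with derivative τ( β · α' · f'(α(s₀)) · γ ), where f(α(s)) denotes polynomial evaluation and f' the formal derivative of f. -/

import Mathlib

open Polynomial Finset

/-- Abstract form of the lemma Str(β ∂_s f(α_s) γ) = Str(β (∂_s α_s) f'(α_s) γ):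
for a tracial continuous functional τ on a Banach algebra, a differentiable
curve α with β, γ commuting with α(s₀), the function s ↦ τ(β f(α(s)) γ) is
differentiable at s₀ with derivative τ(β α' f'(α(s₀)) γ). -/
theorem hasDerivAt_tracial_poly
    {A : Type*} [NormedRing A] [NormedAlgebra ℂ A] [CompleteSpace A]
    (τ : A →L[ℂ] ℂ) (htr : ∀ x y : A, τ (x * y) = τ (y * x))
    (α : ℝ → A) (α' : A) (s₀ : ℝ) (hα : HasDerivAt α α' s₀)
    (β γ : A) (hβ : Commute β (α s₀)) (hγ : Commute γ (α s₀))
    (f : Polynomial ℂ) :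
    HasDerivAt (fun s => τ (β * Polynomial.aeval (α s) f * γ))
      (τ (β * α' * Polynomial.aeval (α s₀) (Polynomial.derivative f) * γ)) s₀ := by
  set a := α s₀ with ha
  -- Step 1: composing with the continuous linear map x ↦ τ (β * x * γ)
  have hL : ∀ (u : ℝ → A) (u' : A), HasDerivAt u u' s₀ →
      HasDerivAt (fun s => τ (β * u s * γ)) (τ (β * u' * γ)) s₀ := by
    intro u u' hu
    have hu' : HasDerivAt (fun s => β * u s * γ) (β * u' * γ) s₀ :=
      (hu.const_mul β).mul_const γ
    have h := ((τ.restrictScalars ℝ).hasFDerivAt (x := β * u s₀ * γ)).comp_hasDerivAt s₀ hu'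
    exact h
  -- Step 2: trace identity
  have key : ∀ (i j : ℕ), τ (β * (a ^ i * α' * a ^ j) * γ) = τ (β * α' * a ^ (i + j) * γ) := by
    intro i j
    have h1 : β * (a ^ i * α' * a ^ j) * γ = (β * a ^ i * α') * (a ^ j * γ) := by
      noncomm_ring
    have h2 : β * α' * a ^ (i + j) * γ = (β * α') * (a ^ (i + j) * γ) := by noncomm_ring
    rw [h1, h2, htr (β * a ^ i * α') (a ^ j * γ), htr (β * α') (a ^ (i + j) * γ)]
    congr 1
    have e1 : a ^ j * γ * (β * a ^ i * α') = γ * (β * (a ^ (i + j) * α')) := by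
      simp only [mul_assoc]
      rw [((hγ.pow_right j).symm).left_comm, ((hβ.pow_right j).symm).left_comm,
        ← mul_assoc (a ^ j) (a ^ i), ← pow_add, add_comm j i]
    have e2 : a ^ (i + j) * γ * (β * α') = γ * (β * (a ^ (i + j) * α')) := by
      simp only [mul_assoc]
      rw [((hγ.pow_right (i + j)).symm).left_comm, ((hβ.pow_right (i + j)).symm).left_comm]
    exact e1.trans e2.symm
  -- Step 3: derivative of powers of α
  have hpow : ∀ n : ℕ, HasDerivAt (fun s => α s ^ n)
      (∑ i ∈ Finset.range n, a ^ i * α' * a ^ (n - 1 - i)) s₀ := by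
    intro n
    induction n with
    | zero => simpa using hasDerivAt_const s₀ (1 : A)
    | succ n ih =>
      have h := ih.mul hα
      have heq : (∑ i ∈ Finset.range n, a ^ i * α' * a ^ (n - 1 - i)) * a + a ^ n * α'
          = ∑ i ∈ Finset.range (n + 1), a ^ i * α' * a ^ (n + 1 - 1 - i) := by
        rw [Finset.sum_range_succ, Finset.sum_mul]
        congr 1
        · refine Finset.sum_congr rfl fun i hi => ?_
          rw [mul_assoc, ← pow_succ]
          have hlt := Finset.mem_range.mp hi
          have : n - 1 - i + 1 = n + 1 - 1 - i := by omega
          rw [this]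
        · simp
      have h : HasDerivAt (fun s => α s ^ (n + 1)) _ s₀ :=
        h.congr_of_eventuallyEq (Filter.Eventually.of_forall fun s => pow_succ (α s) n)
      rwa [← heq]
  -- Step 4: value of τ on the power derivative
  have hsum : ∀ n : ℕ, τ (β * (∑ i ∈ Finset.range n, a ^ i * α' * a ^ (n - 1 - i)) * γ)
      = (n : ℂ) * τ (β * α' * a ^ (n - 1) * γ) := by
    intro n
    rw [Finset.mul_sum, Finset.sum_mul, map_sum]
    have : ∀ i ∈ Finset.range n,
        τ (β * (a ^ i * α' * a ^ (n - 1 - i)) * γ) = τ (β * α' * a ^ (n - 1) * γ) := by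
      intro i hi
      have hlt := Finset.mem_range.mp hi
      have h := key i (n - 1 - i)
      have : i + (n - 1 - i) = n - 1 := by omega
      rwa [this] at h
    rw [Finset.sum_congr rfl this, Finset.sum_const, Finset.card_range, nsmul_eq_mul]
  -- Step 5: monomial case
  have hmono : ∀ (n : ℕ) (c : ℂ),
      HasDerivAt (fun s => τ (β * (aeval (α s)) (monomial n c) * γ))
        (τ (β * α' * (aeval a) (derivative (monomial n c)) * γ)) s₀ := by
    intro n c
    have hfun : ∀ x : A, τ (β * (aeval x) (monomial n c) * γ) = c * τ (β * x ^ n * γ) := by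
      intro x
      rw [aeval_monomial, ← Algebra.smul_def, mul_smul_comm, smul_mul_assoc, map_smul,
        smul_eq_mul]
    have hder : τ (β * α' * (aeval a) (derivative (monomial n c)) * γ)
        = c * ((n : ℂ) * τ (β * α' * a ^ (n - 1) * γ)) := by
      rw [derivative_monomial, aeval_monomial, ← Algebra.smul_def, mul_smul_comm,
        smul_mul_assoc, map_smul, smul_eq_mul, mul_assoc]
    rw [hder]
    simp only [hfun]
    have := (hL _ _ (hpow n)).const_mul c
    rwa [hsum n] at this
  -- Step 6: induction on the polynomial
  induction f using Polynomial.induction_on' with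
  | add p q hp hq =>
    have h := hp.add hq
    simp only [map_add, mul_add, add_mul]
    exact h
  | monomial n c => exact hmono n c
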